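/- Let (E, d_E) be a metric space with d_E(e, e') ≤ π for all e, e' ∈ E, and define D((r₁, e₁), (r₂, e₂)) = arccos( sin r₁ · sin r₂ + cos r₁ · cos r₂ · cos d_E(e₁, e₂) ) for r₁, r₂ ∈ [−π/2, π/2] and e₁, e₂ ∈ E. Then D satisfies the triangle inequality: for all r₁, r₂, r₃ ∈ [−π/2, π/2] and e₁, e₂, e₃ ∈ E, D((r₁, e₁), (r₃, e₃)) ≤ D((r₁, e₁), (r₂, e₂)) + D((r₂, e₂), (r₃, e₃)). -/

import Mathlib

set_option linter.unnecessarySimpa false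

open Real

lemma myArccos_le_arccos {x y : ℝ} (h : x ≤ y) : arccos y ≤ arccos x := by
  unfold Real.arccos
  have := Real.monotone_arcsin h
  linarith

lemma myArccos_cos_le {θ : ℝ} (h : 0 ≤ θ) : arccos (cos θ) ≤ θ := by
  rcases le_or_gt θ π with hπ | hπ
  · rw [arccos_cos h hπ]
  · exact (arccos_le_pi _).trans hπ.le

lemma myInner_triangle {V : Type*} [NormedAddCommGroup V] [InnerProductSpace ℝ V]
    (u v w : V) (hu : ‖u‖ = 1) (hv : ‖v‖ = 1) (hw : ‖w‖ = 1) :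
    arccos (inner ℝ u w) ≤ arccos (inner ℝ u v) + arccos (inner ℝ v w) := by
  set x : ℝ := inner ℝ u v with hx
  set y : ℝ := inner ℝ v w with hy
  set z : ℝ := inner ℝ u w with hz
  have hx1 : |x| ≤ 1 := by
    have := abs_real_inner_le_norm u v; rwa [hu, hv, one_mul] at this
  have hy1 : |y| ≤ 1 := by
    have := abs_real_inner_le_norm v w; rwa [hv, hw, one_mul] at this
  have hx1' := abs_le.1 hx1
  have hy1' := abs_le.1 hy1
  have hvv : inner ℝ v v = 1 := by
    rw [real_inner_self_eq_norm_mul_norm, hv]; ring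
  have h1 : inner ℝ (u - x • v) (w - y • v) = z - x * y := by
    simp [inner_sub_left, inner_sub_right, real_inner_smul_left, real_inner_smul_right,
      hvv, hv, ← hx, ← hy, ← hz]
  have h2 : ‖u - x • v‖ = √(1 - x ^ 2) := by
    rw [← Real.sqrt_sq (norm_nonneg _)]
    congr 1
    rw [norm_sub_sq_real, real_inner_smul_right, ← hx, norm_smul, hu, hv, Real.norm_eq_abs]
    simp [mul_one, sq_abs]
    try ring
  have h3 : ‖w - y • v‖ = √(1 - y ^ 2) := by
    rw [← Real.sqrt_sq (norm_nonneg _)]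
    congr 1
    have hcomm : inner ℝ w v = y := by rw [real_inner_comm]
    rw [norm_sub_sq_real, real_inner_smul_right, hcomm, norm_smul, hw, hv, Real.norm_eq_abs]
    simp [mul_one, sq_abs]
    try ring
  have hCS : x * y - √(1 - x ^ 2) * √(1 - y ^ 2) ≤ z := by
    have := abs_real_inner_le_norm (u - x • v) (w - y • v)
    rw [h1, h2, h3] at this
    have := (abs_le.1 this).1
    linarith
  have hcos : cos (arccos x + arccos y) = x * y - √(1 - x ^ 2) * √(1 - y ^ 2) := by
    rw [cos_add, cos_arccos hx1'.1 hx1'.2, cos_arccos hy1'.1 hy1'.2, sin_arccos, sin_arccos]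
  calc arccos z ≤ arccos (cos (arccos x + arccos y)) := by
        rw [hcos]; exact myArccos_le_arccos hCS
    _ ≤ arccos x + arccos y :=
        myArccos_cos_le (add_nonneg (arccos_nonneg x) (arccos_nonneg y))

/-- The spherical suspension distance
`D((r₁,e₁),(r₂,e₂)) = arccos (sin r₁ sin r₂ + cos r₁ cos r₂ cos (d_E(e₁,e₂)))`
on `[-π/2, π/2] × E`, for a metric space `E` of diameter at most `π`,
satisfies the triangle inequality. -/
theorem sphericalSuspension_triangle {E : Type*} [MetricSpace E]
    (hE : ∀ e e' : E, dist e e' ≤ π)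
    (r₁ r₂ r₃ : ℝ)
    (h₁ : r₁ ∈ Set.Icc (-(π / 2)) (π / 2))
    (h₂ : r₂ ∈ Set.Icc (-(π / 2)) (π / 2))
    (h₃ : r₃ ∈ Set.Icc (-(π / 2)) (π / 2))
    (e₁ e₂ e₃ : E) :
    arccos (sin r₁ * sin r₃ + cos r₁ * cos r₃ * cos (dist e₁ e₃)) ≤
      arccos (sin r₁ * sin r₂ + cos r₁ * cos r₂ * cos (dist e₁ e₂)) +
      arccos (sin r₂ * sin r₃ + cos r₂ * cos r₃ * cos (dist e₂ e₃)) := by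
  have hc₁ : 0 ≤ cos r₁ := Real.cos_nonneg_of_mem_Icc h₁
  have hc₂ : 0 ≤ cos r₂ := Real.cos_nonneg_of_mem_Icc h₂
  have hc₃ : 0 ≤ cos r₃ := Real.cos_nonneg_of_mem_Icc h₃
  set d12 := dist e₁ e₂ with hd12
  set d23 := dist e₂ e₃ with hd23
  set d13 := dist e₁ e₃ with hd13
  set t := min (d12 + d23) π with ht
  have ht0 : d12 ≤ t := le_min (le_add_of_nonneg_right dist_nonneg) (hE e₁ e₂)
  have htπ : t ≤ π := min_le_right _ _
  have ht13 : d13 ≤ t := le_min (dist_triangle e₁ e₂ e₃) (hE e₁ e₃)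
  have ht23 : t - d12 ≤ d23 := by
    have := min_le_left (d12 + d23) π; linarith
  have ht23' : 0 ≤ t - d12 := by linarith
  -- the three points on the unit sphere in ℝ³
  set u₁ : EuclideanSpace ℝ (Fin 3) := WithLp.toLp 2 ![sin r₁, cos r₁, 0] with hu₁
  set u₂ : EuclideanSpace ℝ (Fin 3) := WithLp.toLp 2 ![sin r₂, cos r₂ * cos d12, cos r₂ * sin d12] with hu₂
  set u₃ : EuclideanSpace ℝ (Fin 3) := WithLp.toLp 2 ![sin r₃, cos r₃ * cos t, cos r₃ * sin t] with hu₃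
  have hsum : ∀ r θ : ℝ, ‖(sin r)‖ ^ 2 + ‖cos r * cos θ‖ ^ 2 + ‖cos r * sin θ‖ ^ 2 = 1 := by
    intro r θ
    simp only [Real.norm_eq_abs, sq_abs]
    nlinarith [sin_sq_add_cos_sq r, sin_sq_add_cos_sq θ]
  have hnu₁ : ‖u₁‖ = 1 := by
    rw [hu₁, EuclideanSpace.norm_eq, Fin.sum_univ_three]
    have := hsum r₁ 0
    simp only [PiLp.toLp_apply, Matrix.cons_val_zero, Matrix.cons_val_one, Matrix.head_cons,
      Matrix.cons_val_two, Matrix.tail_cons]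
    rw [show ‖sin r₁‖ ^ 2 + ‖cos r₁‖ ^ 2 + ‖(0:ℝ)‖ ^ 2 = 1 by
      simpa using hsum r₁ 0]
    exact Real.sqrt_one
  have hnu₂ : ‖u₂‖ = 1 := by
    rw [hu₂, EuclideanSpace.norm_eq, Fin.sum_univ_three]
    simp only [PiLp.toLp_apply, Matrix.cons_val_zero, Matrix.cons_val_one, Matrix.head_cons,
      Matrix.cons_val_two, Matrix.tail_cons]
    rw [hsum r₂ d12]
    exact Real.sqrt_one
  have hnu₃ : ‖u₃‖ = 1 := by
    rw [hu₃, EuclideanSpace.norm_eq, Fin.sum_univ_three]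
    simp only [PiLp.toLp_apply, Matrix.cons_val_zero, Matrix.cons_val_one, Matrix.head_cons,
      Matrix.cons_val_two, Matrix.tail_cons]
    rw [hsum r₃ t]
    exact Real.sqrt_one
  have hi12 : inner ℝ u₁ u₂ = sin r₁ * sin r₂ + cos r₁ * cos r₂ * cos d12 := by
    rw [PiLp.inner_apply, Fin.sum_univ_three]
    simp [hu₁, hu₂]
    ring
  have hi23 : inner ℝ u₂ u₃ = sin r₂ * sin r₃ + cos r₂ * cos r₃ * cos (t - d12) := by
    rw [PiLp.inner_apply, Fin.sum_univ_three]
    simp [hu₂, hu₃, Real.cos_sub]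
    ring
  have hi13 : inner ℝ u₁ u₃ = sin r₁ * sin r₃ + cos r₁ * cos r₃ * cos t := by
    rw [PiLp.inner_apply, Fin.sum_univ_three]
    simp [hu₁, hu₃]
    ring
  have key := myInner_triangle u₁ u₂ u₃ hnu₁ hnu₂ hnu₃
  rw [hi12, hi23, hi13] at key
  have step1 : arccos (sin r₁ * sin r₃ + cos r₁ * cos r₃ * cos d13) ≤
      arccos (sin r₁ * sin r₃ + cos r₁ * cos r₃ * cos t) := by
    apply myArccos_le_arccos
    have : cos t ≤ cos d13 :=
      Real.cos_le_cos_of_nonneg_of_le_pi dist_nonneg htπ ht13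
    nlinarith [mul_nonneg hc₁ hc₃, this]
  have step3 : arccos (sin r₂ * sin r₃ + cos r₂ * cos r₃ * cos (t - d12)) ≤
      arccos (sin r₂ * sin r₃ + cos r₂ * cos r₃ * cos d23) := by
    apply myArccos_le_arccos
    have : cos d23 ≤ cos (t - d12) :=
      Real.cos_le_cos_of_nonneg_of_le_pi ht23' (hE e₂ e₃) ht23
    nlinarith [mul_nonneg hc₂ hc₃, this]
  linarith
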